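/- Let a ≥ 1 and t > 0, and for b ≥ 1 define q_b(y, t) = (e^{-t/4} / √(4πt)) · y · (1 − e^{-(log(y/b))^2 / t}) for y ≥ b and q_b(y, t) = 0 for 1 ≤ y < b. Then the function y ↦ (q_a(y, t) − q_1(y, t)) · y^{-2} is integrable on [1, ∞) and ∫_1^∞ (q_a(y, t) − q_1(y, t)) · y^{-2} dy = −(1/√(4πt)) · e^{-t/4} · log a. (This integral is the relative heat trace Tr(e^{-tΔ_{a,0}} − e^{-tΔ_{1,0}}) of the model cusp operators.) -/

import Mathlib

open MeasureTheory

/-- The diagonal of the Dirichlet heat kernel of `Δ_{b,0} = −y² d²/dy²` on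
`L²([b,∞), y⁻²dy)`, extended by `0` for `y < b`. -/
noncomputable def cuspHeatDiag (b y t : ℝ) : ℝ :=
  if b ≤ y then
    (Real.exp (-t / 4) / Real.sqrt (4 * Real.pi * t)) * y *
      (1 - Real.exp (-(Real.log (y / b)) ^ 2 / t))
  else 0

open Real Set in
/-- Key Gaussian pointwise bound: `exp (-u²/t) ≤ exp (t/16 - u/2)`. -/
lemma cusp_gauss_bound {t : ℝ} (ht : 0 < t) (u : ℝ) :
    Real.exp (-u ^ 2 / t) ≤ Real.exp (t / 16 - u / 2) := by
  apply Real.exp_le_exp.2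
  rw [div_le_iff₀ ht]
  nlinarith [sq_nonneg (u - t / 4)]

open Real Set

set_option maxHeartbeats 1000000 in
/-- The relative heat trace of the model cusp operators:
`Tr(e^{-tΔ_{a,0}} − e^{-tΔ_{1,0}}) = ∫_1^∞ (q_a(y,t) − q_1(y,t)) y⁻² dy
  = −(1/√(4πt)) e^{-t/4} log a`. -/
theorem relative_heat_trace_model_cusp (a t : ℝ) (ha : 1 ≤ a) (ht : 0 < t) :
    IntegrableOn (fun y : ℝ => (cuspHeatDiag a y t - cuspHeatDiag 1 y t) / y ^ 2)
      (Set.Ici 1) ∧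
    ∫ y in Set.Ici (1 : ℝ), (cuspHeatDiag a y t - cuspHeatDiag 1 y t) / y ^ 2 =
      -(1 / Real.sqrt (4 * Real.pi * t)) * Real.exp (-t / 4) * Real.log a := by
  have ha0 : (0 : ℝ) < a := lt_of_lt_of_le one_pos ha
  set C : ℝ := Real.exp (-t / 4) / Real.sqrt (4 * Real.pi * t) with hCdef
  have hC0 : 0 ≤ C := by
    apply div_nonneg (Real.exp_pos _).le (Real.sqrt_nonneg _)
  set L : ℝ := Real.log a with hLdef
  have hL0 : 0 ≤ L := Real.log_nonneg ha
  set φ : ℝ → ℝ := fun u => Real.exp (-u ^ 2 / t) with hφdef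
  have φcont : Continuous φ := by fun_prop
  have φint : Integrable φ := by
    have h1 : Integrable (fun x : ℝ => Real.exp (-(1 / t) * x ^ 2)) :=
      integrable_exp_neg_mul_sq (by positivity)
    refine h1.congr ?_
    filter_upwards with u
    simp only [hφdef]
    congr 1
    ring
  -- the antiderivative of the Gaussian
  set G : ℝ → ℝ := fun u => ∫ s in (0 : ℝ)..u, φ s with hGdef
  have hG : ∀ u : ℝ, HasDerivAt G (φ u) u := fun u =>
    intervalIntegral.integral_hasDerivAt_right (φcont.intervalIntegrable _ _)
      (φcont.stronglyMeasurableAtFilter _ _) φcont.continuousAt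
  have hG0 : G 0 = 0 := intervalIntegral.integral_same
  set I : ℝ := ∫ u in Ioi (0 : ℝ), φ u with hIdef
  have hGtend : Filter.Tendsto G Filter.atTop (nhds I) :=
    intervalIntegral_tendsto_integral_Ioi 0 φint.integrableOn Filter.tendsto_id
  set h : ℝ → ℝ := fun y => (cuspHeatDiag a y t - cuspHeatDiag 1 y t) / y ^ 2 with hhdef
  -- pointwise formulas
  have hEq1 : ∀ y ∈ Icc (1 : ℝ) a, h y = -C * (1 - φ (Real.log y)) / y := by
    intro y hy
    have hy0 : (0 : ℝ) < y := lt_of_lt_of_le one_pos hy.1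
    have h1 : cuspHeatDiag 1 y t = C * y * (1 - φ (Real.log y)) := by
      rw [cuspHeatDiag, if_pos hy.1, div_one]
    have h2 : cuspHeatDiag a y t = 0 := by
      rcases lt_or_ge y a with hya | hya
      · rw [cuspHeatDiag, if_neg (not_le.2 hya)]
      · have : y = a := le_antisymm hy.2 hya
        subst this
        rw [cuspHeatDiag, if_pos le_rfl, div_self hy0.ne']
        simp
    rw [hhdef]
    simp only [h1, h2]
    field_simp
    ring
  have hEq2 : ∀ y : ℝ, a ≤ y → h y = C * (φ (Real.log y) - φ (Real.log y - L)) / y := by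
    intro y hya
    have hy1 : (1 : ℝ) ≤ y := le_trans ha hya
    have hy0 : (0 : ℝ) < y := lt_of_lt_of_le one_pos hy1
    have h1 : cuspHeatDiag 1 y t = C * y * (1 - φ (Real.log y)) := by
      rw [cuspHeatDiag, if_pos hy1, div_one]
    have h2 : cuspHeatDiag a y t = C * y * (1 - φ (Real.log y - L)) := by
      rw [cuspHeatDiag, if_pos hya, Real.log_div hy0.ne' ha0.ne']
    rw [hhdef]
    simp only [h1, h2]
    field_simp
    ring
  -- integrability on [1, a]
  have hcont1 : ContinuousOn (fun y => -C * (1 - φ (Real.log y)) / y) (Icc 1 a) := by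
    have hlogc : ContinuousOn (fun y : ℝ => Real.log y) (Icc 1 a) :=
      continuousOn_id.log (fun y hy => (lt_of_lt_of_le one_pos hy.1).ne')
    exact (continuousOn_const.mul (continuousOn_const.sub
      (φcont.comp_continuousOn hlogc))).div continuousOn_id
      (fun y hy => (lt_of_lt_of_le one_pos hy.1).ne')
  have intIcc : IntegrableOn h (Icc 1 a) :=
    (hcont1.integrableOn_compact isCompact_Icc).congr_fun
      (fun y hy => (hEq1 y hy).symm) measurableSet_Icc
  -- measurability
  have hmeas : Measurable h := by
    have hm : ∀ b : ℝ, Measurable (fun y : ℝ => cuspHeatDiag b y t) := by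
      intro b
      unfold cuspHeatDiag
      refine Measurable.ite (measurableSet_le measurable_const measurable_id) ?_
        measurable_const
      exact (measurable_const.mul measurable_id).mul (measurable_const.sub
        (Real.measurable_exp.comp
          (((Real.measurable_log.comp (measurable_id.div_const b)).pow_const 2).neg.div_const t)))
    exact ((hm a).sub (hm 1)).div (measurable_id.pow_const 2)
  -- integrability on (a, ∞)
  have intIoi : IntegrableOn h (Ioi a) := by
    have hbound : Integrable (fun y : ℝ =>
        C * (Real.exp (t / 16) + Real.exp (t / 16 + L / 2)) * y ^ (-(3:ℝ)/2))
        (volume.restrict (Ioi a)) :=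
      ((integrableOn_Ioi_rpow_of_lt (by norm_num) ha0).const_mul _)
    refine Integrable.mono' hbound (hmeas.aestronglyMeasurable) ?_
    filter_upwards [ae_restrict_mem measurableSet_Ioi] with y hy
    have hya : a ≤ y := le_of_lt hy
    have hy0 : (0 : ℝ) < y := lt_of_lt_of_le ha0 hya
    rw [hEq2 y hya]
    set l : ℝ := Real.log y with hldef
    have hyexp : y = Real.exp l := (Real.exp_log hy0).symm
    have b1 : φ l ≤ Real.exp (t / 16 - l / 2) := cusp_gauss_bound ht l
    have b2 : φ (l - L) ≤ Real.exp (t / 16 + L / 2 - l / 2) := by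
      have := cusp_gauss_bound ht (l - L)
      refine this.trans (le_of_eq ?_)
      congr 1
      ring
    have babs : |φ l - φ (l - L)| ≤
        Real.exp (t / 16 - l / 2) + Real.exp (t / 16 + L / 2 - l / 2) := by
      rw [abs_le]
      constructor
      · have := (Real.exp_pos (-l ^ 2 / t)).le
        nlinarith [Real.exp_pos (-(l - L) ^ 2 / t), Real.exp_pos (-l ^ 2 / t)]
      · nlinarith [Real.exp_pos (-(l - L) ^ 2 / t), Real.exp_pos (-l ^ 2 / t)]
    have key : C * |φ l - φ (l - L)| / y ≤
        C * (Real.exp (t / 16) + Real.exp (t / 16 + L / 2)) * y ^ (-(3:ℝ)/2) := by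
      have hrw : y ^ (-(3:ℝ)/2) = Real.exp (l * (-(3:ℝ)/2)) := by
        rw [Real.rpow_def_of_pos hy0]
      calc C * |φ l - φ (l - L)| / y
          ≤ C * (Real.exp (t / 16 - l / 2) + Real.exp (t / 16 + L / 2 - l / 2)) / y := by
            gcongr
        _ = C * (Real.exp (t / 16) + Real.exp (t / 16 + L / 2)) * y ^ (-(3:ℝ)/2) := by
            have e1 : Real.exp (t / 16 - l / 2) =
                Real.exp (t / 16) * Real.exp (l * (-(3:ℝ)/2)) * Real.exp l := by
              rw [← Real.exp_add, ← Real.exp_add]; congr 1; ring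
            have e2 : Real.exp (t / 16 + L / 2 - l / 2) =
                Real.exp (t / 16 + L / 2) * Real.exp (l * (-(3:ℝ)/2)) * Real.exp l := by
              rw [← Real.exp_add, ← Real.exp_add]; congr 1; ring
            rw [hrw, hyexp, div_eq_iff (Real.exp_pos l).ne', e1, e2]
            ring
    calc ‖C * (φ l - φ (l - L)) / y‖ = C * |φ l - φ (l - L)| / y := by
          rw [Real.norm_eq_abs, abs_div, abs_mul, abs_of_nonneg hC0, abs_of_pos hy0]
      _ ≤ _ := key
  -- values of the two integrals
  have valIcc : ∫ y in Icc (1 : ℝ) a, h y = -C * (L - G L) := by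
    rw [setIntegral_congr_fun measurableSet_Icc hEq1,
      integral_Icc_eq_integral_Ioc, ← intervalIntegral.integral_of_le ha]
    have hFTC : ∫ y in (1 : ℝ)..a, -C * (1 - φ (Real.log y)) / y =
        (-C * (Real.log a - G (Real.log a))) - (-C * (Real.log 1 - G (Real.log 1))) := by
      apply intervalIntegral.integral_eq_sub_of_hasDerivAt
      · intro y hy
        rw [uIcc_of_le ha] at hy
        have hy0 : (0 : ℝ) < y := lt_of_lt_of_le one_pos hy.1
        have hlog : HasDerivAt Real.log y⁻¹ y := Real.hasDerivAt_log hy0.ne'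
        have hGl : HasDerivAt (fun z => G (Real.log z)) (φ (Real.log y) * y⁻¹) y :=
          (hG (Real.log y)).comp y hlog
        have := ((hlog.sub hGl).const_mul (-C))
        refine this.congr_deriv ?_
        rw [div_eq_mul_inv]
        try ring
      · apply ContinuousOn.intervalIntegrable
        rw [uIcc_of_le ha]
        exact hcont1
    rw [hFTC]
    simp only [Real.log_one, hG0, ← hLdef, sub_zero, mul_zero]
    try ring
  have valIoi : ∫ y in Ioi a, h y = -(C * G L) := by
    have hderiv : ∀ x ∈ Ici a, HasDerivAt (fun y => C * (G (Real.log y) - G (Real.log y - L)))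
        (h x) x := by
      intro x hx
      have hx0 : (0 : ℝ) < x := lt_of_lt_of_le ha0 hx
      have hlog : HasDerivAt Real.log x⁻¹ x := Real.hasDerivAt_log hx0.ne'
      have h1 : HasDerivAt (fun z => G (Real.log z)) (φ (Real.log x) * x⁻¹) x :=
        (hG (Real.log x)).comp x hlog
      have h2 : HasDerivAt (fun z => G (Real.log z - L)) (φ (Real.log x - L) * x⁻¹) x :=
        by have := (hG (Real.log x - L)).comp x (hlog.sub_const L); exact this
      have := (h1.sub h2).const_mul C
      rw [hEq2 x hx]
      refine this.congr_deriv ?_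
      rw [div_eq_mul_inv]
      try ring
    have htend : Filter.Tendsto (fun y => C * (G (Real.log y) - G (Real.log y - L)))
        Filter.atTop (nhds 0) := by
      have t1 : Filter.Tendsto (fun y => G (Real.log y)) Filter.atTop (nhds I) :=
        hGtend.comp Real.tendsto_log_atTop
      have t2 : Filter.Tendsto (fun y => G (Real.log y - L)) Filter.atTop (nhds I) :=
        hGtend.comp (Filter.tendsto_atTop_add_const_right _ (-L)
          Real.tendsto_log_atTop |>.congr (fun y => by rw [sub_eq_add_neg]))
      have := ((t1.sub t2).const_mul C)
      simpa using this
    have := integral_Ioi_of_hasDerivAt_of_tendsto' hderiv intIoi htend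
    rw [this, ← hLdef, sub_self, hG0]
    ring
  -- put it together
  have hsplit : Ici (1 : ℝ) = Icc 1 a ∪ Ioi a := (Icc_union_Ioi_eq_Ici ha).symm
  have hdisj : Disjoint (Icc (1 : ℝ) a) (Ioi a) := by
    rw [Set.disjoint_left]
    rintro x ⟨_, hx2⟩ hx3
    exact absurd hx3 (not_lt.2 hx2)
  constructor
  · rw [hsplit]
    exact intIcc.union intIoi
  · have : ∫ y in Ici (1 : ℝ), h y = (∫ y in Icc (1 : ℝ) a, h y) + ∫ y in Ioi a, h y := by
      rw [hsplit]
      exact setIntegral_union hdisj measurableSet_Ioi intIcc intIoi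
    rw [this, valIcc, valIoi]
    rw [hCdef, hLdef]
    ring
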